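/- arXiv:1009.4675 — 3 statements merged into one kernel-verified Lean document; each statement's English description precedes it below -/
import Mathlib

section
/- Let A be a bounded operator on a Hilbert space with ‖A² − A‖ ≤ ε for some ε < 1/16. Then for every complex ζ with |ζ − 1| = 1/2, the operator A − ζ is invertible, and its inverse is given by (A − ζ)⁻¹ = (A + ζ − 1)(ζ(1 − ζ) + R)⁻¹ where R = A² − A. -/
set_option maxHeartbeats 1000000


/-- For a bounded operator `A` on a complex Hilbert space with
`‖A² − A‖ ≤ ε < 1/16` and `|ζ − 1| = 1/2`, the operator `A − ζ` is invertible with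
inverse `(A + ζ − 1)(ζ(1 − ζ) + R)⁻¹` where `R = A² − A`. -/
theorem stmt_0 {H : Type*} [NormedAddCommGroup H] [InnerProductSpace ℂ H]
    [CompleteSpace H] (A : H →L[ℂ] H) (ε : ℝ) (hε : ε < 1 / 16)
    (hA : ‖A * A - A‖ ≤ ε) (ζ : ℂ) (hζ : ‖ζ - 1‖ = 1 / 2) :
    IsUnit ((ζ * (1 - ζ)) • (1 : H →L[ℂ] H) + (A * A - A)) ∧
    IsUnit (A - ζ • (1 : H →L[ℂ] H)) ∧
    Ring.inverse (A - ζ • (1 : H →L[ℂ] H)) =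
      (A + (ζ - 1) • (1 : H →L[ℂ] H)) *
        Ring.inverse ((ζ * (1 - ζ)) • (1 : H →L[ℂ] H) + (A * A - A)) := by
  set R : H →L[ℂ] H := A * A - A with hR
  set c : ℂ := ζ * (1 - ζ) with hc
  have hε0 : (0 : ℝ) ≤ ε := le_trans (norm_nonneg _) hA
  have hζnorm : (1 : ℝ) / 2 ≤ ‖ζ‖ := by
    have := norm_sub_norm_le (1 : ℂ) ζ
    simp only [norm_one] at this
    have h1 : ‖(1 : ℂ) - ζ‖ = 1 / 2 := by rw [← hζ, ← norm_neg]; ring_nf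
    linarith
  have hcnorm : (1 : ℝ) / 4 ≤ ‖c‖ := by
    have h1 : ‖(1 : ℂ) - ζ‖ = 1 / 2 := by rw [← hζ, ← norm_neg]; ring_nf
    rw [hc, norm_mul, h1]
    linarith
  have hc0 : c ≠ 0 := by
    intro h; rw [h, norm_zero] at hcnorm; linarith
  -- the key element
  have hRnorm : ‖(-(c⁻¹ • R))‖ < 1 := by
    rw [norm_neg, norm_smul, norm_inv]
    have hcpos : (0:ℝ) < ‖c‖ := lt_of_lt_of_le (by norm_num) hcnorm
    rw [inv_mul_lt_iff₀ hcpos, mul_one]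
    calc ‖R‖ ≤ ε := hA
      _ < 1/16 := hε
      _ ≤ ‖c‖ := by linarith
  have hu1 : IsUnit ((1 : H →L[ℂ] H) - (-(c⁻¹ • R))) := (Units.oneSub _ hRnorm).isUnit
  have hcu : IsUnit (c • (1 : H →L[ℂ] H)) := by
    have : c • (1 : H →L[ℂ] H) = algebraMap ℂ (H →L[ℂ] H) c := by
      simp [Algebra.algebraMap_eq_smul_one]
    rw [this]
    exact (isUnit_iff_ne_zero.mpr hc0).map (algebraMap ℂ (H →L[ℂ] H))
  have hfact : c • (1 : H →L[ℂ] H) + R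
      = (c • (1 : H →L[ℂ] H)) * ((1 : H →L[ℂ] H) - (-(c⁻¹ • R))) := by
    rw [sub_neg_eq_add, mul_add, mul_one, smul_mul_assoc, one_mul, smul_smul,
      mul_inv_cancel₀ hc0, one_smul]
  have hu : IsUnit (c • (1 : H →L[ℂ] H) + R) := by
    rw [hfact]; exact hcu.mul hu1
  refine ⟨hu, ?_⟩
  -- factorization identities
  set u : H →L[ℂ] H := c • (1 : H →L[ℂ] H) + R with hudef
  have key1 : (A - ζ • (1 : H →L[ℂ] H)) * (A + (ζ - 1) • (1 : H →L[ℂ] H)) = u := by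
    simp only [hudef, hR, hc, sub_mul, mul_add, add_mul, mul_sub,
      smul_mul_assoc, mul_smul_comm, one_mul, mul_one, smul_smul]
    module
  have key2 : (A + (ζ - 1) • (1 : H →L[ℂ] H)) * (A - ζ • (1 : H →L[ℂ] H)) = u := by
    simp only [hudef, hR, hc, sub_mul, mul_add, add_mul, mul_sub,
      smul_mul_assoc, mul_smul_comm, one_mul, mul_one, smul_smul]
    module
  set v := hu.unit with hv
  have hvval : (v : H →L[ℂ] H) = u := hu.unit_spec
  -- inverse of u commutes with A + (ζ-1)•1
  have hcommu : (A + (ζ - 1) • (1 : H →L[ℂ] H)) * u = u * (A + (ζ - 1) • (1 : H →L[ℂ] H)) := by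
    simp only [hudef, hR, mul_add, add_mul, mul_sub, sub_mul,
      smul_mul_assoc, mul_smul_comm, one_mul, mul_one, mul_assoc]
    module
  have hcomm : Commute (A + (ζ - 1) • (1 : H →L[ℂ] H)) (v : H →L[ℂ] H) := by
    rw [hvval]; exact hcommu
  have hcommInv : Commute (A + (ζ - 1) • (1 : H →L[ℂ] H)) ((↑v⁻¹ : H →L[ℂ] H)) :=
    hcomm.units_inv_right
  -- build the unit for A - ζ
  have hmul1 : (A - ζ • (1 : H →L[ℂ] H)) * ((A + (ζ - 1) • (1 : H →L[ℂ] H)) * ↑v⁻¹) = 1 := by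
    rw [← mul_assoc, key1, ← hvval, Units.mul_inv]
  have hcommu2 : (A - ζ • (1 : H →L[ℂ] H)) * u = u * (A - ζ • (1 : H →L[ℂ] H)) := by
    simp only [hudef, hR, mul_add, add_mul, mul_sub, sub_mul,
      smul_mul_assoc, mul_smul_comm, one_mul, mul_one, mul_assoc]
    module
  have hcomm2 : Commute (A - ζ • (1 : H →L[ℂ] H)) ((↑v⁻¹ : H →L[ℂ] H)) := by
    have : Commute (A - ζ • (1 : H →L[ℂ] H)) (v : H →L[ℂ] H) := by rw [hvval]; exact hcommu2
    exact this.units_inv_right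
  have hmul2 : ((A + (ζ - 1) • (1 : H →L[ℂ] H)) * ↑v⁻¹) * (A - ζ • (1 : H →L[ℂ] H)) = 1 := by
    rw [mul_assoc, ← hcomm2.eq, ← mul_assoc, key2, ← hvval, Units.mul_inv]
  have hunit : IsUnit (A - ζ • (1 : H →L[ℂ] H)) :=
    ⟨⟨A - ζ • (1 : H →L[ℂ] H),
      (A + (ζ - 1) • (1 : H →L[ℂ] H)) * ↑v⁻¹, hmul1, hmul2⟩, rfl⟩
  refine ⟨hunit, ?_⟩
  have hcancel : (A - ζ • (1 : H →L[ℂ] H)) * Ring.inverse (A - ζ • (1 : H →L[ℂ] H)) = 1 :=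
    Ring.mul_inverse_cancel _ hunit
  have hinv : Ring.inverse (A - ζ • (1 : H →L[ℂ] H))
      = (A + (ζ - 1) • (1 : H →L[ℂ] H)) * ↑v⁻¹ := by
    calc Ring.inverse (A - ζ • (1 : H →L[ℂ] H))
        = (((A + (ζ - 1) • (1 : H →L[ℂ] H)) * ↑v⁻¹) * (A - ζ • (1 : H →L[ℂ] H))) *
            Ring.inverse (A - ζ • (1 : H →L[ℂ] H)) := by rw [hmul2, one_mul]
      _ = ((A + (ζ - 1) • (1 : H →L[ℂ] H)) * ↑v⁻¹) *
            ((A - ζ • (1 : H →L[ℂ] H)) * Ring.inverse (A - ζ • (1 : H →L[ℂ] H))) := by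
          rw [mul_assoc]
      _ = (A + (ζ - 1) • (1 : H →L[ℂ] H)) * ↑v⁻¹ := by rw [hcancel, mul_one]
  rw [hinv]
  congr 1
  rw [← hvval, Ring.inverse_unit]
end

section
/- Let A be a bounded operator on a Hilbert space with ‖A² − A‖ ≤ ε, ε sufficiently small. Define the Riesz projection Π_A := (2πi)⁻¹ ∮_{|ζ−1|=1/2} (ζ − A)⁻¹ dζ. Then Π_A is a projection (Π_A² = Π_A) and ‖A − Π_A‖ = O(ε) as ε → 0, with a constant independent of A (given a uniform bound ‖A‖ ≤ M). -/
open MeasureTheory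

open Metric

section
set_option linter.unusedSectionVars false
set_option maxHeartbeats 1000000
set_option maxRecDepth 8000
variable {E : Type*} [NormedRing E] [NormedAlgebra ℂ E] [CompleteSpace E]

lemma my_norm_pow_le (h1 : ‖(1:E)‖ ≤ 1) {x : E} {a : ℝ} (h : ‖x‖ ≤ a) :
    ∀ n, ‖x ^ n‖ ≤ a ^ n := by
  have ha : 0 ≤ a := le_trans (norm_nonneg x) h
  intro n
  induction n with
  | zero => simpa using h1
  | succ n ih =>
    rw [pow_succ, pow_succ]
    exact le_trans (norm_mul_le _ _) (mul_le_mul ih h (norm_nonneg x) (pow_nonneg ha n))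

lemma intI_ne_one {k : ℕ} (hk : k ≠ 1) : (∮ ζ in C(1, 1/2), ((ζ - 1)⁻¹) ^ k) = 0 := by
  have h : ∀ ζ : ℂ, ((ζ - 1)⁻¹) ^ k = (ζ - 1) ^ (-(k:ℤ)) := by
    intro ζ; rw [inv_pow, ← zpow_natCast (ζ-1), ← zpow_neg]
  simp only [h]
  exact circleIntegral.integral_sub_zpow_of_ne (by omega) _ _ _

lemma intI_one : (∮ ζ in C(1, 1/2), (ζ - 1)⁻¹) = 2 * Real.pi * Complex.I :=
  circleIntegral.integral_sub_inv_of_mem_ball (mem_ball_self (by norm_num))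

lemma clball_ne_zero {ζ : ℂ} (h : ζ ∈ closedBall (1:ℂ) (1/2)) : ζ ≠ 0 := by
  intro h0
  rw [mem_closedBall_iff_norm, h0] at h
  norm_num at h

lemma intZ (k : ℕ) : (∮ ζ in C(1, 1/2), (ζ⁻¹) ^ k) = 0 := by
  rcases eq_or_ne k 1 with rfl | hk
  · simp only [pow_one]
    refine Complex.circleIntegral_eq_zero_of_differentiable_on_off_countable (by norm_num)
      Set.countable_empty ?_ ?_
    · intro z hz
      exact (continuousAt_inv₀ (clball_ne_zero hz)).continuousWithinAt
    · intro z hz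
      exact differentiableAt_inv (clball_ne_zero (ball_subset_closedBall hz.1))
  · have h : ∀ ζ : ℂ, (ζ⁻¹) ^ k = (ζ - 0) ^ (-(k:ℤ)) := by
      intro ζ; rw [sub_zero, inv_pow, ← zpow_natCast ζ, ← zpow_neg]
    simp only [h]
    exact circleIntegral.integral_sub_zpow_of_ne (by omega) _ _ _

lemma my_commute_tsum {f : ℕ → E} {a : E} (hf : Summable f) (h : ∀ n, Commute a (f n)) :
    Commute a (∑' n, f n) := by
  rw [Commute, SemiconjBy, ← hf.tsum_mul_left a, ← hf.tsum_mul_right a]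
  exact tsum_congr fun n => (h n).eq

lemma catalan_le_four_pow (n : ℕ) : (catalan n : ℝ) ≤ 4 ^ n := by
  have h1 : catalan n ≤ n.centralBinom := by
    rw [catalan_eq_centralBinom_div]; exact Nat.div_le_self _ _
  have h2 : n.centralBinom ≤ 4 ^ n := by
    calc n.centralBinom = (2*n).choose n := rfl
    _ ≤ (2*n+1).choose n := Nat.choose_le_choose n (by omega)
    _ ≤ 4 ^ n := Nat.choose_middle_le_pow n
  exact_mod_cast le_trans h1 h2

lemma my_sqrt (h1 : ‖(1:E)‖ ≤ 1) {B : E} {ε : ℝ} (hε0 : 0 ≤ ε) (hε : ε < 1/32)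
    (hB : ‖B‖ ≤ ε) :
    ∃ T s : E, T*T = 1 + (4:ℂ)•B ∧ T*s = 1 ∧ s*T = 1 ∧ ‖T - 1‖ ≤ 4*ε ∧ ‖s‖ ≤ 2 ∧
      ‖s - 1‖ ≤ 8*ε ∧ ∀ x : E, Commute x B → Commute x T ∧ Commute x s := by
  have hr0 : (0:ℝ) ≤ 4*ε := by linarith
  have hr : 4*ε < 1 := by linarith
  set X : E := -B with hXdef
  have hX : ‖X‖ ≤ ε := by simpa [hXdef] using hB
  set f : ℕ → E := fun n => (catalan n : ℂ) • X ^ n with hfdef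
  have hf_norm : ∀ n, ‖f n‖ ≤ (4*ε)^n := by
    intro n
    rw [hfdef]
    simp only [norm_smul, Complex.norm_natCast]
    calc (catalan n : ℝ) * ‖X ^ n‖ ≤ 4^n * ε^n := by
          exact mul_le_mul (catalan_le_four_pow n) (my_norm_pow_le h1 hX n) (norm_nonneg _) (by positivity)
      _ = (4*ε)^n := (mul_pow _ _ _).symm
  have hgeom : Summable (fun n : ℕ => (4*ε)^n) := summable_geometric_of_lt_one hr0 hr
  have hsum_norm : Summable (fun n => ‖f n‖) :=
    Summable.of_nonneg_of_le (fun n => norm_nonneg _) hf_norm hgeom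
  have hfs : Summable f := hsum_norm.of_norm
  set c : E := ∑' n, f n with hcdef
  have hgeom_val : ∑' n : ℕ, (4*ε)^n = (1 - 4*ε)⁻¹ := tsum_geometric_of_lt_one hr0 hr
  have hinv2 : (1 - 4*ε)⁻¹ ≤ 2 := by
    rw [inv_le_comm₀ (by linarith) (by norm_num)]; linarith
  have hc_norm : ‖c‖ ≤ 2 := by
    calc ‖c‖ ≤ ∑' n, ‖f n‖ := norm_tsum_le_tsum_norm hsum_norm
    _ ≤ ∑' n : ℕ, (4*ε)^n := Summable.tsum_le_tsum hf_norm hsum_norm hgeom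
    _ ≤ 2 := by rw [hgeom_val]; exact hinv2
  have hc1 : c = 1 + ∑' n, f (n+1) := by
    rw [hcdef, Summable.tsum_eq_zero_add hfs]
    congr 1
    simp [hfdef]
  -- Cauchy product
  have hcc : c * c = ∑' n, (catalan (n+1) : ℂ) • X ^ n := by
    rw [hcdef, tsum_mul_tsum_eq_tsum_sum_antidiagonal_of_summable_norm hsum_norm hsum_norm]
    refine tsum_congr fun n => ?_
    rw [catalan_succ' n]
    push_cast
    rw [Finset.sum_smul]
    refine Finset.sum_congr rfl fun kl hkl => ?_
    have hk : kl.1 + kl.2 = n := Finset.HasAntidiagonal.mem_antidiagonal.mp hkl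
    rw [hfdef]
    simp only []
    rw [smul_mul_smul_comm, ← pow_add, hk]
  have hsum2 : Summable (fun n => (catalan (n+1) : ℂ) • X ^ n) := by
    refine Summable.of_norm (Summable.of_nonneg_of_le (fun n => norm_nonneg _) ?_
      (hgeom.mul_left 4))
    intro n
    simp only [norm_smul, Complex.norm_natCast]
    calc (catalan (n+1) : ℝ) * ‖X ^ n‖ ≤ 4^(n+1) * ε^n := by
          exact mul_le_mul (catalan_le_four_pow (n+1)) (my_norm_pow_le h1 hX n) (norm_nonneg _) (by positivity)
      _ = 4 * (4*ε)^n := by rw [mul_pow]; ring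
  have hXcc : X * (c * c) = c - 1 := by
    rw [hcc, ← hsum2.tsum_mul_left X]
    rw [eq_sub_iff_add_eq, hc1, add_comm]
    congr 1
    refine tsum_congr fun n => ?_
    rw [hfdef]
    simp only []
    rw [mul_smul_comm, ← pow_succ']
  have hXc : Commute X c := by
    refine my_commute_tsum hfs fun n => ?_
    exact ((Commute.refl X).pow_right n).smul_right _
  set T : E := 1 - (2:ℂ) • (X * c) with hTdef
  -- T*T = 1 + 4B
  have key : (X * c) * (X * c) = X * c - X := by
    have h2 : c * (X * c) = X * (c * c) := by
      rw [← mul_assoc, ← hXc.eq, mul_assoc]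
    rw [mul_assoc, h2, hXcc, mul_sub, mul_one]
  have hT2 : T * T = 1 + (4:ℂ) • B := by
    rw [hTdef, show B = -X by rw [hXdef, neg_neg]]
    simp only [sub_mul, mul_sub, one_mul, mul_one, smul_mul_smul_comm, key]
    module
  have hT1 : ‖T - 1‖ ≤ 4*ε := by
    have he : T - 1 = -((2:ℂ) • (X * c)) := by rw [hTdef]; abel
    rw [he, norm_neg, norm_smul]
    have h2 : ‖(2:ℂ)‖ = 2 := by simp
    rw [h2]
    calc 2 * ‖X * c‖ ≤ 2 * (ε * 2) := by
          have := norm_mul_le X c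
          have : ‖X * c‖ ≤ ε * 2 :=
            le_trans this (mul_le_mul hX hc_norm (norm_nonneg _) hε0)
          linarith
      _ = 4 * ε := by ring
  have hT1' : ‖(1:E) - T‖ ≤ 4*ε := by rw [norm_sub_rev]; exact hT1
  have hTlt : ‖(1:E) - T‖ < 1 := lt_of_le_of_lt hT1' (by linarith)
  set U : Eˣ := Units.oneSub ((1:E) - T) hTlt with hUdef
  set s : E := ((U⁻¹ : Eˣ) : E) with hsdef
  have hUval : (U : E) = T := by rw [hUdef]; simp [Units.oneSub]
  have hTs : T * s = 1 := by rw [← hUval, hsdef]; exact U.mul_inv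
  have hsT : s * T = 1 := by rw [← hUval, hsdef]; exact U.inv_mul
  have hs_tsum : s = ∑' n, ((1:E)-T)^n := rfl
  have hpow : ∀ n, ‖((1:E)-T)^n‖ ≤ (4*ε)^n := my_norm_pow_le h1 hT1'
  have hsumT : Summable (fun n => ‖((1:E)-T)^n‖) :=
    Summable.of_nonneg_of_le (fun n => norm_nonneg _) hpow hgeom
  have hs_norm : ‖s‖ ≤ 2 := by
    rw [hs_tsum]
    calc ‖∑' n, ((1:E)-T)^n‖ ≤ ∑' n, ‖((1:E)-T)^n‖ := norm_tsum_le_tsum_norm hsumT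
      _ ≤ ∑' n : ℕ, (4*ε)^n := Summable.tsum_le_tsum hpow hsumT hgeom
      _ ≤ 2 := by rw [hgeom_val]; exact hinv2
  have hs1 : ‖s - 1‖ ≤ 8*ε := by
    have he : s - 1 = s * ((1:E) - T) := by rw [mul_sub, mul_one, hsT]
    rw [he]
    calc ‖s * ((1:E) - T)‖ ≤ ‖s‖ * ‖(1:E) - T‖ := norm_mul_le _ _
      _ ≤ 2 * (4*ε) := mul_le_mul hs_norm hT1' (norm_nonneg _) (by norm_num)
      _ = 8 * ε := by ring
  refine ⟨T, s, hT2, hTs, hsT, hT1, hs_norm, hs1, fun x hxB => ?_⟩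
  have hxX : Commute x X := by rw [hXdef]; exact hxB.neg_right
  have hxc : Commute x c := my_commute_tsum hfs fun n => ((hxX.pow_right n)).smul_right _
  have hxT : Commute x T := by
    rw [hTdef]
    exact (Commute.one_right x).sub_right ((hxX.mul_right hxc).smul_right _)
  have hxU : Commute x (U : E) := by rw [hUval]; exact hxT
  exact ⟨hxT, hxU.units_inv_right⟩

lemma commute_smul_one (a : ℂ) (x : E) : Commute ((a:ℂ) • (1:E)) x := by
  rw [Commute, SemiconjBy, smul_mul_assoc, one_mul, mul_smul_comm, mul_one]

lemma sphere_ne_zero' {ζ : ℂ} (h : ζ ∈ sphere (1:ℂ) (1/2)) : ζ ≠ 0 := by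
  intro h0
  rw [mem_sphere_iff_norm, h0] at h
  norm_num at h

lemma sphere_norm_half' {ζ : ℂ} (h : ζ ∈ sphere (1:ℂ) (1/2)) : ‖ζ - 1‖ = 1/2 :=
  mem_sphere_iff_norm.mp h

lemma sphere_sub_one_ne' {ζ : ℂ} (h : ζ ∈ sphere (1:ℂ) (1/2)) : ζ - 1 ≠ 0 := by
  intro h0
  have := sphere_norm_half' h
  rw [h0] at this; norm_num at this

lemma sphere_half_le_norm' {ζ : ℂ} (h : ζ ∈ sphere (1:ℂ) (1/2)) : 1/2 ≤ ‖ζ‖ := by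
  have h1 := sphere_norm_half' h
  have h2 : ‖(1:ℂ)‖ ≤ ‖ζ‖ + ‖ζ - 1‖ := by
    calc ‖(1:ℂ)‖ = ‖ζ + (1 - ζ)‖ := by ring_nf
      _ ≤ ‖ζ‖ + ‖1 - ζ‖ := norm_add_le _ _
      _ = ‖ζ‖ + ‖ζ - 1‖ := by rw [norm_sub_rev]
  simp only [norm_one, h1] at h2
  linarith

lemma res_hasSum (h1 : ‖(1:E)‖ ≤ 1) (A T s v : E) (ε : ℝ) (hε0 : 0 ≤ ε) (hε : ε < 1/32)
    (hT2 : T*T = 1 + (4:ℂ)•(A*A - A)) (hTs : T*s = 1) (hsT : s*T = 1)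
    (hAT : Commute A T) (hAs : Commute A s)
    (hv : v = (2⁻¹:ℂ)•(1-T)) (hvnorm : ‖v‖ ≤ 2*ε)
    {ζ : ℂ} (hζ : ζ ∈ sphere (1:ℂ) (1/2)) :
    HasSum (fun n => ((-1:ℂ)^n * ((ζ-1)⁻¹)^n - (ζ-1)*(ζ⁻¹)^(n+1)) • (s*v^n)
      + ((-1:ℂ)^n * ((ζ-1)⁻¹)^(n+1) - (ζ⁻¹)^(n+1)) • (A*(s*v^n)))
      (Ring.inverse (ζ • (1:E) - A)) := by
  have hζ0 : ζ ≠ 0 := sphere_ne_zero' hζ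
  have hζ1 : ζ - 1 ≠ 0 := sphere_sub_one_ne' hζ
  have hn1 : ‖(ζ-1)⁻¹‖ = 2 := by
    rw [norm_inv, sphere_norm_half' hζ]; norm_num
  have hζpos : (0:ℝ) < ‖ζ‖ := lt_of_lt_of_le (by norm_num) (sphere_half_le_norm' hζ)
  have hn0 : ‖ζ⁻¹‖ ≤ 2 := by
    rw [norm_inv, inv_le_comm₀ hζpos (by norm_num)]
    linarith [sphere_half_le_norm' hζ]
  -- commutation basics
  have hsTc : Commute s T := by rw [Commute, SemiconjBy, hsT, hTs]
  have hsv : Commute s v := by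
    rw [hv]; exact ((Commute.one_right s).sub_right hsTc).smul_right _
  have hAv : Commute A v := by
    rw [hv]; exact ((Commute.one_right A).sub_right hAT).smul_right _
  -- B facts
  set B : E := A*A - A with hBdef
  have hvv' : v * v = v + B := by
    have hexp : v * v = (2⁻¹ * 2⁻¹ : ℂ) • ((1:E) - T - T + T*T) := by
      rw [hv, smul_mul_smul_comm]
      congr 1
      simp only [sub_mul, mul_sub, one_mul, mul_one]
      abel
    rw [hexp, hT2, hv, hBdef]
    module
  -- geometric inverses
  set y₁ : E := -((ζ-1)⁻¹ • v) with hy₁def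
  set y₂ : E := ζ⁻¹ • v with hy₂def
  have hy₁n : ‖y₁‖ < 1 := by
    rw [hy₁def, norm_neg, norm_smul, hn1]
    nlinarith
  have hy₂n : ‖y₂‖ < 1 := by
    rw [hy₂def, norm_smul]
    nlinarith [norm_nonneg ζ⁻¹, norm_nonneg v]
  set u₁ : Eˣ := Units.oneSub y₁ hy₁n with hu₁def
  set u₂ : Eˣ := Units.oneSub y₂ hy₂n with hu₂def
  set P : E := (ζ-1)⁻¹ • ((u₁⁻¹ : Eˣ) : E) with hPdef
  set Q : E := ζ⁻¹ • ((u₂⁻¹ : Eˣ) : E) with hQdef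
  set X₁ : E := (ζ-1) • (1:E) + v with hX₁def
  set X₂ : E := ζ • (1:E) - v with hX₂def
  have hu₁val : (u₁ : E) = 1 + (ζ-1)⁻¹ • v := by
    rw [hu₁def]; show 1 - y₁ = _; rw [hy₁def, sub_neg_eq_add]
  have hu₂val : (u₂ : E) = 1 - ζ⁻¹ • v := by rw [hu₂def]; rfl
  have hX₁ : X₁ = (ζ-1) • (u₁ : E) := by
    rw [hX₁def, hu₁val, smul_add, smul_smul, mul_inv_cancel₀ hζ1, one_smul]
  have hX₂ : X₂ = ζ • (u₂ : E) := by
    rw [hX₂def, hu₂val, smul_sub, smul_smul, mul_inv_cancel₀ hζ0, one_smul]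
  have hX₁P : X₁ * P = 1 := by
    rw [hX₁, hPdef, smul_mul_smul_comm, mul_inv_cancel₀ hζ1, u₁.mul_inv, one_smul]
  have hPX₁ : P * X₁ = 1 := by
    rw [hX₁, hPdef, smul_mul_smul_comm, inv_mul_cancel₀ hζ1, u₁.inv_mul, one_smul]
  have hX₂Q : X₂ * Q = 1 := by
    rw [hX₂, hQdef, smul_mul_smul_comm, mul_inv_cancel₀ hζ0, u₂.mul_inv, one_smul]
  have hQX₂ : Q * X₂ = 1 := by
    rw [hX₂, hQdef, smul_mul_smul_comm, inv_mul_cancel₀ hζ0, u₂.inv_mul, one_smul]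
  -- commuting with P and Q
  have hcP : ∀ x : E, Commute x v → Commute x P := by
    intro x hxv
    have h1' : Commute x (u₁ : E) := by
      rw [hu₁val]
      exact (Commute.one_right x).add_right (hxv.smul_right _)
    exact (h1'.units_inv_right).smul_right _
  have hcQ : ∀ x : E, Commute x v → Commute x Q := by
    intro x hxv
    have h2' : Commute x (u₂ : E) := by
      rw [hu₂val]
      exact (Commute.one_right x).sub_right (hxv.smul_right _)
    exact (h2'.units_inv_right).smul_right _
  set G : E := (ζ-1) • (1:E) + A with hGdef
  -- K1 and K2
  have hAA : A * A = B + A := by rw [hBdef]; abel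
  have K1 : (ζ • (1:E) - A) * G = (ζ*ζ-ζ) • (1:E) - B := by
    rw [hGdef]
    simp only [sub_mul, mul_add, smul_mul_assoc, mul_smul_comm, one_mul, mul_one, hAA]
    module
  have K2 : X₁ * X₂ = (ζ*ζ-ζ) • (1:E) - B := by
    rw [hX₁def, hX₂def]
    simp only [add_mul, mul_sub, smul_mul_assoc, mul_smul_comm, one_mul, mul_one, hvv']
    module
  -- the unit
  have hX₂P : Commute X₂ P := by
    rw [hX₂def]
    exact (commute_smul_one ζ P).sub_left (hcP v (Commute.refl v))
  have pf1 : (ζ • (1:E) - A) * (G * (P * Q)) = 1 := by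
    rw [← mul_assoc]
    rw [K1]
    rw [← K2]
    rw [mul_assoc X₁ X₂ (P*Q)]
    rw [← mul_assoc X₂ P Q]
    rw [hX₂P.eq]
    rw [mul_assoc P X₂ Q]
    rw [hX₂Q]
    rw [mul_one]
    exact hX₁P
  have hAG : Commute A G := by
    rw [hGdef]
    exact ((commute_smul_one (ζ-1) A).symm).add_right (Commute.refl A)
  have hAc : Commute (ζ • (1:E) - A) (G * (P * Q)) := by
    refine ((commute_smul_one ζ _).sub_left ?_)
    exact hAG.mul_right ((hcP A hAv).mul_right (hcQ A hAv))
  have pf2 : (G * (P * Q)) * (ζ • (1:E) - A) = 1 := by rw [← hAc.eq]; exact pf1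
  have hRinv : Ring.inverse (ζ • (1:E) - A) = G * (P * Q) := by
    have : Ring.inverse ((⟨ζ • (1:E) - A, G * (P*Q), pf1, pf2⟩ : Eˣ) : E)
        = ((⟨ζ • (1:E) - A, G * (P*Q), pf1, pf2⟩ : Eˣ)⁻¹ : Eˣ) := Ring.inverse_unit _
    exact this
  -- partial fractions
  have hX21 : X₂ - X₁ = T := by
    rw [hX₂def, hX₁def, hv]
    module
  have hsP : Commute s P := hcP s hsv
  have hPQ : G * (P * Q) = G * (s * P) - G * (s * Q) := by
    have e0 : P - Q = (P * T) * Q := by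
      have e1 : P = (P * X₂) * Q := by rw [mul_assoc, hX₂Q, mul_one]
      have e2 : Q = (P * X₁) * Q := by rw [hPX₁, one_mul]
      have e4 : P * X₂ - P * X₁ = P * T := by rw [← mul_sub, hX21]
      calc P - Q = (P * X₂) * Q - (P * X₁) * Q := by rw [← e1, ← e2]
        _ = (P * X₂ - P * X₁) * Q := by rw [sub_mul]
        _ = (P * T) * Q := by rw [e4]
    have e3 : s * (P - Q) = P * Q := by
      rw [e0, ← mul_assoc, ← mul_assoc, hsP.eq, mul_assoc P s T, hsT, mul_one]
    rw [← e3, mul_sub s, mul_sub G]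
  -- geometric sums
  have hgeo₁ : HasSum (fun n => y₁ ^ n) ((u₁⁻¹ : Eˣ) : E) := by
    have hs' := (summable_geometric_of_norm_lt_one hy₁n).hasSum
    have he : ((u₁⁻¹ : Eˣ) : E) = ∑' n, y₁ ^ n := rfl
    rwa [he]
  have hgeo₂ : HasSum (fun n => y₂ ^ n) ((u₂⁻¹ : Eˣ) : E) := by
    have hs' := (summable_geometric_of_norm_lt_one hy₂n).hasSum
    have he : ((u₂⁻¹ : Eˣ) : E) = ∑' n, y₂ ^ n := rfl
    rwa [he]
  have H1 : HasSum (fun n => (ζ-1)⁻¹ • ((G*s) * y₁ ^ n)) (G * (s * P)) := by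
    have h' := (hgeo₁.mul_left (G*s)).const_smul ((ζ-1)⁻¹)
    have he : G * (s * P) = (ζ-1)⁻¹ • ((G*s) * ((u₁⁻¹ : Eˣ) : E)) := by
      rw [hPdef, mul_smul_comm, mul_smul_comm, ← mul_assoc]
    rwa [← he] at h'
  have H2 : HasSum (fun n => ζ⁻¹ • ((G*s) * y₂ ^ n)) (G * (s * Q)) := by
    have h' := (hgeo₂.mul_left (G*s)).const_smul (ζ⁻¹)
    have he : G * (s * Q) = ζ⁻¹ • ((G*s) * ((u₂⁻¹ : Eˣ) : E)) := by
      rw [hQdef, mul_smul_comm, mul_smul_comm, ← mul_assoc]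
    rwa [← he] at h'
  have H := H1.sub H2
  rw [hRinv, hPQ]
  have hterm : ∀ n : ℕ, (ζ-1)⁻¹ • ((G*s) * y₁ ^ n) - ζ⁻¹ • ((G*s) * y₂ ^ n)
      = ((-1:ℂ)^n * ((ζ-1)⁻¹)^n - (ζ-1)*(ζ⁻¹)^(n+1)) • (s*v^n)
      + ((-1:ℂ)^n * ((ζ-1)⁻¹)^(n+1) - (ζ⁻¹)^(n+1)) • (A*(s*v^n)) := by
    intro n
    rw [hy₁def, hy₂def, hGdef, ← neg_smul]
    simp only [smul_pow, add_mul, smul_mul_assoc, one_mul, mul_smul_comm, smul_smul,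
      smul_add, mul_assoc]
    rw [neg_pow ((ζ-1)⁻¹) n]
    match_scalars
    · field_simp
      linear_combination (ζ - 1) * ζ⁻¹ ^ n * (mul_inv_cancel₀ hζ0)
    · field_simp
      linear_combination (-(ζ * (ζ - 1)⁻¹ ^ n * (-1) ^ n)) * (mul_inv_cancel₀ hζ1)
        + (ζ - 1) * ζ⁻¹ ^ n * (mul_inv_cancel₀ hζ0)
  rw [show (fun n => ((-1:ℂ)^n * ((ζ-1)⁻¹)^n - (ζ-1)*(ζ⁻¹)^(n+1)) • (s*v^n)
      + ((-1:ℂ)^n * ((ζ-1)⁻¹)^(n+1) - (ζ⁻¹)^(n+1)) • (A*(s*v^n)))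
    = (fun n => (ζ-1)⁻¹ • ((G*s) * y₁ ^ n) - ζ⁻¹ • ((G*s) * y₂ ^ n)) from
      funext fun n => (hterm n).symm]
  exact H

lemma my_circleIntegral_add {f g : ℂ → E} {c : ℂ} {R : ℝ} (hf : CircleIntegrable f c R)
    (hg : CircleIntegrable g c R) :
    (∮ z in C(c, R), (f z + g z)) = (∮ z in C(c, R), f z) + (∮ z in C(c, R), g z) := by
  simp only [circleIntegral, smul_add]
  exact intervalIntegral.integral_add hf.out hg.out

lemma circle_integral_eq (h1 : ‖(1:E)‖ ≤ 1) (A T s v : E) (M ε : ℝ) (hM : ‖A‖ ≤ M)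
    (hM0 : 0 ≤ M) (hε0 : 0 ≤ ε) (hε : ε < 1/32)
    (hT2 : T*T = 1 + (4:ℂ)•(A*A - A)) (hTs : T*s = 1) (hsT : s*T = 1)
    (hAT : Commute A T) (hAs : Commute A s)
    (hv : v = (2⁻¹:ℂ)•(1-T)) (hvnorm : ‖v‖ ≤ 2*ε) (hs2 : ‖s‖ ≤ 2) :
    (∮ ζ in C(1, 1/2), Ring.inverse (ζ • (1:E) - A)) =
      (2 * Real.pi * Complex.I : ℂ) • (A * s) - (2 * Real.pi * Complex.I : ℂ) • (s * v) := by
  set R : ℂ → E := fun ζ => Ring.inverse (ζ • (1:E) - A) with hRdef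
  set F : ℕ → ℂ → E := fun n ζ =>
    ((-1:ℂ)^n * ((ζ-1)⁻¹)^n - (ζ-1)*(ζ⁻¹)^(n+1)) • (s*v^n)
    + ((-1:ℂ)^n * ((ζ-1)⁻¹)^(n+1) - (ζ⁻¹)^(n+1)) • (A*(s*v^n)) with hFdef
  have hmem : ∀ θ : ℝ, circleMap 1 (1/2) θ ∈ Metric.sphere (1:ℂ) (1/2) :=
    circleMap_mem_sphere 1 (by norm_num)
  -- basic bounds on sphere
  have hb1 : ∀ {ζ : ℂ}, ζ ∈ Metric.sphere (1:ℂ) (1/2) → ‖(ζ-1)⁻¹‖ = 2 := by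
    intro ζ hζ; rw [norm_inv, sphere_norm_half' hζ]; norm_num
  have hb0 : ∀ {ζ : ℂ}, ζ ∈ Metric.sphere (1:ℂ) (1/2) → ‖ζ⁻¹‖ ≤ 2 := by
    intro ζ hζ
    have hζpos : (0:ℝ) < ‖ζ‖ := lt_of_lt_of_le (by norm_num) (sphere_half_le_norm' hζ)
    rw [norm_inv, inv_le_comm₀ hζpos (by norm_num)]
    linarith [sphere_half_le_norm' hζ]
  have hvnn : (0:ℝ) ≤ 2*ε := by linarith
  have hεr0 : (0:ℝ) ≤ 4*ε := by linarith
  have hεr1 : 4*ε < 1 := by linarith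
  -- norm bound for F n on the sphere
  have hFb : ∀ (n : ℕ) {ζ : ℂ}, ζ ∈ Metric.sphere (1:ℂ) (1/2) →
      ‖F n ζ‖ ≤ (8*M+4) * (4*ε)^n := by
    intro n ζ hζ
    have hvp : ‖v^n‖ ≤ (2*ε)^n := my_norm_pow_le h1 hvnorm n
    have hsv : ‖s*v^n‖ ≤ 2*(2*ε)^n := by
      calc ‖s*v^n‖ ≤ ‖s‖*‖v^n‖ := norm_mul_le _ _
        _ ≤ 2*(2*ε)^n := mul_le_mul hs2 hvp (norm_nonneg _) (by norm_num)
    have hAsv : ‖A*(s*v^n)‖ ≤ M*(2*(2*ε)^n) := by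
      calc ‖A*(s*v^n)‖ ≤ ‖A‖*‖s*v^n‖ := norm_mul_le _ _
        _ ≤ M*(2*(2*ε)^n) := mul_le_mul hM hsv (norm_nonneg _) hM0
    have hp1 : ‖((-1:ℂ))^n * ((ζ-1)⁻¹)^n - (ζ-1)*(ζ⁻¹)^(n+1)‖ ≤ 2^(n+1) := by
      have e1 : ‖((-1:ℂ))^n * ((ζ-1)⁻¹)^n‖ ≤ 2^n := by
        rw [norm_mul, norm_pow, norm_pow, norm_neg, norm_one, one_pow, one_mul, hb1 hζ]
      have e2 : ‖(ζ-1)*(ζ⁻¹)^(n+1)‖ ≤ 2^n := by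
        rw [norm_mul, norm_pow, sphere_norm_half' hζ]
        calc 1/2 * ‖ζ⁻¹‖^(n+1) ≤ 1/2 * 2^(n+1) :=
            mul_le_mul_of_nonneg_left (pow_le_pow_left₀ (norm_nonneg _) (hb0 hζ) (n+1))
              (by norm_num)
          _ = 2^n := by rw [pow_succ]; ring
      calc ‖((-1:ℂ))^n * ((ζ-1)⁻¹)^n - (ζ-1)*(ζ⁻¹)^(n+1)‖
          ≤ ‖((-1:ℂ))^n * ((ζ-1)⁻¹)^n‖ + ‖(ζ-1)*(ζ⁻¹)^(n+1)‖ := norm_sub_le _ _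
        _ ≤ 2^n + 2^n := add_le_add e1 e2
        _ = 2^(n+1) := by rw [pow_succ]; ring
    have hp2 : ‖((-1:ℂ))^n * ((ζ-1)⁻¹)^(n+1) - (ζ⁻¹)^(n+1)‖ ≤ 2^(n+2) := by
      have e1 : ‖((-1:ℂ))^n * ((ζ-1)⁻¹)^(n+1)‖ ≤ 2^(n+1) := by
        rw [norm_mul, norm_pow, norm_pow, norm_neg, norm_one, one_pow, one_mul, hb1 hζ]
      have e2 : ‖(ζ⁻¹)^(n+1)‖ ≤ 2^(n+1) := by
        rw [norm_pow]
        exact pow_le_pow_left₀ (norm_nonneg _) (hb0 hζ) (n+1)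
      calc ‖((-1:ℂ))^n * ((ζ-1)⁻¹)^(n+1) - (ζ⁻¹)^(n+1)‖
          ≤ ‖((-1:ℂ))^n * ((ζ-1)⁻¹)^(n+1)‖ + ‖(ζ⁻¹)^(n+1)‖ := norm_sub_le _ _
        _ ≤ 2^(n+1) + 2^(n+1) := add_le_add e1 e2
        _ = 2^(n+2) := by rw [pow_succ _ (n+1)]; ring
    calc ‖F n ζ‖ ≤ ‖((-1:ℂ))^n * ((ζ-1)⁻¹)^n - (ζ-1)*(ζ⁻¹)^(n+1)‖ * ‖s*v^n‖
        + ‖((-1:ℂ))^n * ((ζ-1)⁻¹)^(n+1) - (ζ⁻¹)^(n+1)‖ * ‖A*(s*v^n)‖ := by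
          simp only [hFdef]
          exact le_trans (norm_add_le _ _) (le_of_eq (by rw [norm_smul, norm_smul]))
      _ ≤ 2^(n+1) * (2*(2*ε)^n) + 2^(n+2) * (M*(2*(2*ε)^n)) := by
        refine add_le_add (mul_le_mul hp1 hsv (norm_nonneg _) (by positivity))
          (mul_le_mul hp2 hAsv (norm_nonneg _) (by positivity))
      _ = (8*M+4) * (4*ε)^n := by
        have h4 : (4*ε)^n = 2^n * (2*ε)^n := by rw [← mul_pow]; ring_nf
        rw [h4]; ring
  -- continuity of F n on the sphere
  have hFcont : ∀ n, ContinuousOn (F n) (Metric.sphere (1:ℂ) (1/2)) := by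
    intro n
    have hc1 : ContinuousOn (fun ζ : ℂ => (ζ-1)⁻¹) (Metric.sphere (1:ℂ) (1/2)) :=
      fun ζ hζ => ((continuousAt_id.sub continuousAt_const).inv₀
        (sphere_sub_one_ne' hζ)).continuousWithinAt
    have hc0 : ContinuousOn (fun ζ : ℂ => ζ⁻¹) (Metric.sphere (1:ℂ) (1/2)) :=
      fun ζ hζ => (continuousAt_id.inv₀ (sphere_ne_zero' hζ)).continuousWithinAt
    refine ContinuousOn.add (ContinuousOn.smul ?_ continuousOn_const)
      (ContinuousOn.smul ?_ continuousOn_const)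
    · exact (continuousOn_const.mul (hc1.pow n)).sub
        (((continuousOn_id.sub continuousOn_const)).mul (hc0.pow (n+1)))
    · exact (continuousOn_const.mul (hc1.pow (n+1))).sub (hc0.pow (n+1))
  have hFint : ∀ n, CircleIntegrable (F n) 1 (1/2) := fun n =>
    (hFcont n).circleIntegrable (by norm_num)
  -- Step 1 : HasSum of the integrals
  have hstep1 : HasSum (fun n => ∮ ζ in C(1, 1/2), F n ζ) (∮ ζ in C(1, 1/2), R ζ) := by
    have hds : HasSum (fun n => ∫ θ in (0:ℝ)..(2*Real.pi),
        deriv (circleMap 1 (1/2)) θ • F n (circleMap 1 (1/2) θ))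
        (∫ θ in (0:ℝ)..(2*Real.pi),
          deriv (circleMap 1 (1/2)) θ • R (circleMap 1 (1/2) θ)) := by
      refine intervalIntegral.hasSum_integral_of_dominated_convergence
        (fun n _ => (1/2) * ((8*M+4) * (4*ε)^n)) (fun n => ?_) (fun n => ?_) ?_ ?_ ?_
      · -- measurability
        refine Continuous.aestronglyMeasurable ?_
        have hd : Continuous (fun θ : ℝ => deriv (circleMap 1 (1/2)) θ) := by
          simp only [deriv_circleMap]
          exact (continuous_circleMap 0 (1/2)).mul continuous_const
        exact hd.smul ((hFcont n).comp_continuous (continuous_circleMap _ _) hmem)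
      · -- bound
        refine Filter.Eventually.of_forall fun θ _ => ?_
        rw [norm_smul, deriv_circleMap]
        have hder : ‖circleMap 0 (1/2) θ * Complex.I‖ = 1/2 := by
          rw [norm_mul, norm_circleMap_zero, Complex.norm_I]
          norm_num
        rw [hder]
        exact mul_le_mul_of_nonneg_left (hFb n (hmem θ)) (by norm_num)
      · -- summable bound
        refine Filter.Eventually.of_forall fun θ _ => ?_
        exact ((summable_geometric_of_lt_one hεr0 hεr1).mul_left _).mul_left _
      · -- integrable bound
        exact intervalIntegrable_const
      · -- pointwise HasSum
        refine Filter.Eventually.of_forall fun θ _ => ?_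
        exact (res_hasSum h1 A T s v ε hε0 hε hT2 hTs hsT hAT hAs hv hvnorm
          (hmem θ)).const_smul _
    exact hds
  -- Step 2 : value of each integral
  have hval : ∀ n : ℕ, (∮ ζ in C(1, 1/2), F n ζ)
      = (if n = 1 then -(2 * Real.pi * Complex.I : ℂ) else 0) • (s*v^n)
      + (if n = 0 then (2 * Real.pi * Complex.I : ℂ) else 0) • (A*(s*v^n)) := by
    intro n
    have hc1 : ContinuousOn (fun ζ : ℂ => (ζ-1)⁻¹) (Metric.sphere (1:ℂ) (1/2)) :=
      fun ζ hζ => ((continuousAt_id.sub continuousAt_const).inv₀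
        (sphere_sub_one_ne' hζ)).continuousWithinAt
    have hc0 : ContinuousOn (fun ζ : ℂ => ζ⁻¹) (Metric.sphere (1:ℂ) (1/2)) :=
      fun ζ hζ => (continuousAt_id.inv₀ (sphere_ne_zero' hζ)).continuousWithinAt
    have hint1 : CircleIntegrable
        (fun ζ : ℂ => ((-1:ℂ)^n * ((ζ-1)⁻¹)^n - (ζ-1)*(ζ⁻¹)^(n+1)) • (s*v^n)) 1 (1/2) := by
      refine ContinuousOn.circleIntegrable (by norm_num) ?_
      exact (((continuousOn_const.mul (hc1.pow n)).sub
        (((continuousOn_id.sub continuousOn_const)).mul (hc0.pow (n+1)))).smul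
        continuousOn_const)
    have hint2 : CircleIntegrable
        (fun ζ : ℂ => ((-1:ℂ)^n * ((ζ-1)⁻¹)^(n+1) - (ζ⁻¹)^(n+1)) • (A*(s*v^n))) 1 (1/2) := by
      refine ContinuousOn.circleIntegrable (by norm_num) ?_
      exact (((continuousOn_const.mul (hc1.pow (n+1))).sub (hc0.pow (n+1))).smul
        continuousOn_const)
    have hsplit : (∮ ζ in C(1, 1/2), F n ζ)
        = (∮ ζ in C(1, 1/2), ((-1:ℂ)^n * ((ζ-1)⁻¹)^n - (ζ-1)*(ζ⁻¹)^(n+1))) • (s*v^n)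
        + (∮ ζ in C(1, 1/2), ((-1:ℂ)^n * ((ζ-1)⁻¹)^(n+1) - (ζ⁻¹)^(n+1))) • (A*(s*v^n)) := by
      simp only [hFdef]
      rw [my_circleIntegral_add hint1 hint2]
      rw [circleIntegral.integral_smul_const, circleIntegral.integral_smul_const]
    -- scalar integrals
    have hsc1 : CircleIntegrable (fun ζ : ℂ => (-1:ℂ)^n * ((ζ-1)⁻¹)^n) 1 (1/2) :=
      ContinuousOn.circleIntegrable (by norm_num) (continuousOn_const.mul (hc1.pow n))
    have hsc2 : CircleIntegrable (fun ζ : ℂ => (ζ-1)*(ζ⁻¹)^(n+1)) 1 (1/2) :=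
      ContinuousOn.circleIntegrable (by norm_num)
        (((continuousOn_id.sub continuousOn_const)).mul (hc0.pow (n+1)))
    have hz1 : (∮ ζ in C(1, 1/2), (ζ-1)*(ζ⁻¹)^(n+1)) = 0 := by
      have he : Set.EqOn (fun ζ : ℂ => (ζ-1)*(ζ⁻¹)^(n+1))
          (fun ζ : ℂ => (ζ⁻¹)^n - (ζ⁻¹)^(n+1)) (Metric.sphere (1:ℂ) (1/2)) := by
        intro ζ hζ
        have hζ0 : ζ ≠ 0 := sphere_ne_zero' hζ
        simp only []
        field_simp
        linear_combination ζ⁻¹ ^ n * (mul_inv_cancel₀ hζ0)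
      rw [circleIntegral.integral_congr (by norm_num) he]
      have hintz1 : CircleIntegrable (fun ζ : ℂ => (ζ⁻¹)^n) 1 (1/2) :=
        ContinuousOn.circleIntegrable (by norm_num) (hc0.pow n)
      have hintz2 : CircleIntegrable (fun ζ : ℂ => (ζ⁻¹)^(n+1)) 1 (1/2) :=
        ContinuousOn.circleIntegrable (by norm_num) (hc0.pow (n+1))
      rw [circleIntegral.integral_sub hintz1 hintz2, intZ n, intZ (n+1), sub_zero]
    have hs1val : (∮ ζ in C(1, 1/2), ((-1:ℂ)^n * ((ζ-1)⁻¹)^n - (ζ-1)*(ζ⁻¹)^(n+1)))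
        = (if n = 1 then -(2 * Real.pi * Complex.I : ℂ) else 0) := by
      rw [circleIntegral.integral_sub hsc1 hsc2, hz1, sub_zero,
        circleIntegral.integral_const_mul]
      rcases eq_or_ne n 1 with rfl | hn
      · rw [if_pos rfl]
        simp only [pow_one]
        rw [intI_one]
        ring
      · rw [intI_ne_one hn, mul_zero, if_neg hn]
    have hsc3 : CircleIntegrable (fun ζ : ℂ => (-1:ℂ)^n * ((ζ-1)⁻¹)^(n+1)) 1 (1/2) :=
      ContinuousOn.circleIntegrable (by norm_num) (continuousOn_const.mul (hc1.pow (n+1)))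
    have hsc4 : CircleIntegrable (fun ζ : ℂ => (ζ⁻¹)^(n+1)) 1 (1/2) :=
      ContinuousOn.circleIntegrable (by norm_num) (hc0.pow (n+1))
    have hs2val : (∮ ζ in C(1, 1/2), ((-1:ℂ)^n * ((ζ-1)⁻¹)^(n+1) - (ζ⁻¹)^(n+1)))
        = (if n = 0 then (2 * Real.pi * Complex.I : ℂ) else 0) := by
      rw [circleIntegral.integral_sub hsc3 hsc4, intZ (n+1), sub_zero,
        circleIntegral.integral_const_mul]
      rcases eq_or_ne n 0 with rfl | hn
      · rw [if_pos rfl]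
        simp only [pow_zero, zero_add, pow_one, one_mul]
        exact intI_one
      · rw [intI_ne_one (by omega), mul_zero, if_neg hn]
    rw [hsplit, hs1val, hs2val]
  -- Step 3 : conclude
  have hg : ∀ n ∉ ({0, 1} : Finset ℕ), (∮ ζ in C(1, 1/2), F n ζ) = 0 := by
    intro n hn
    simp only [Finset.mem_insert, Finset.mem_singleton] at hn
    push_neg at hn
    rw [hval n, if_neg hn.2, if_neg hn.1, zero_smul, zero_smul, add_zero]
  have hfin : HasSum (fun n => ∮ ζ in C(1, 1/2), F n ζ)
      (∑ n ∈ ({0, 1} : Finset ℕ), ∮ ζ in C(1, 1/2), F n ζ) :=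
    hasSum_sum_of_ne_finset_zero hg
  have := hstep1.unique hfin
  rw [this]
  rw [Finset.sum_pair (by norm_num : (0:ℕ) ≠ 1), hval 0, hval 1]
  simp only [if_pos rfl, if_neg (by norm_num : (0:ℕ) ≠ 1), if_neg (by norm_num : (1:ℕ) ≠ 0),
    pow_zero, pow_one, mul_one, zero_smul, add_zero, zero_add, neg_smul]
  norm_num
  module
end

section
open Metric
set_option maxHeartbeats 1000000

/-- If `‖A² − A‖ ≤ ε` with `ε` small, the Riesz projection
`Π_A = (2πi)⁻¹ ∮_{|ζ−1|=1/2} (ζ − A)⁻¹ dζ` is a projection and `‖A − Π_A‖ = O(ε)`,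
with constant depending only on a bound `‖A‖ ≤ M`. -/
theorem stmt_1 (M : ℝ) (hM : 0 < M) :
    ∃ C > (0 : ℝ), ∃ ε₀ > (0 : ℝ), ∀ (H : Type) (_ : NormedAddCommGroup H)
      (_ : InnerProductSpace ℂ H) (_ : CompleteSpace H),
      ∀ (A : H →L[ℂ] H) (ε : ℝ), 0 ≤ ε → ε < ε₀ → ‖A‖ ≤ M → ‖A * A - A‖ ≤ ε →
      (let RieszProj : H →L[ℂ] H :=
        (2 * (Real.pi : ℂ) * Complex.I)⁻¹ •
          (∮ ζ in C(1, 1 / 2), Ring.inverse (ζ • (1 : H →L[ℂ] H) - A));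
       RieszProj * RieszProj = RieszProj ∧ ‖A - RieszProj‖ ≤ C * ε) := by
  refine ⟨8*M+4, by linarith, 1/32, by norm_num, ?_⟩
  intro H _ _ _ A ε hε0 hε hMA hB
  have h1 : ‖(1 : H →L[ℂ] H)‖ ≤ 1 := by
    rw [ContinuousLinearMap.one_def]
    exact ContinuousLinearMap.norm_id_le
  obtain ⟨T, s, hT2, hTs, hsT, hT1, hs2, hs1, hcomm⟩ := my_sqrt h1 hε0 hε hB
  have hAB : Commute A (A*A - A) :=
    (((Commute.refl A).mul_right (Commute.refl A))).sub_right (Commute.refl A)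
  obtain ⟨hAT, hAs⟩ := hcomm A hAB
  set v : H →L[ℂ] H := (2⁻¹:ℂ) • (1 - T) with hvdef
  have hvnorm : ‖v‖ ≤ 2*ε := by
    rw [hvdef, norm_smul, norm_sub_rev]
    have : ‖(2⁻¹:ℂ)‖ = 2⁻¹ := by simp
    rw [this]
    linarith
  have hInt := circle_integral_eq h1 A T s v M ε hMA (le_of_lt hM) hε0 hε hT2 hTs hsT
    hAT hAs hvdef hvnorm hs2
  have h2πI : (2*(Real.pi:ℂ)*Complex.I) ≠ 0 :=
    mul_ne_zero (mul_ne_zero two_ne_zero (Complex.ofReal_ne_zero.mpr Real.pi_ne_zero))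
      Complex.I_ne_zero
  have hPi : (2 * (Real.pi : ℂ) * Complex.I)⁻¹ •
      (∮ ζ in C(1, 1 / 2), Ring.inverse (ζ • (1 : H →L[ℂ] H) - A)) = A*s - s*v := by
    rw [hInt, smul_sub, smul_smul, smul_smul, inv_mul_cancel₀ h2πI, one_smul, one_smul]
  show ((2 * (Real.pi : ℂ) * Complex.I)⁻¹ •
      (∮ ζ in C(1, 1 / 2), Ring.inverse (ζ • (1 : H →L[ℂ] H) - A))) *
      ((2 * (Real.pi : ℂ) * Complex.I)⁻¹ •
      (∮ ζ in C(1, 1 / 2), Ring.inverse (ζ • (1 : H →L[ℂ] H) - A))) =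
      (2 * (Real.pi : ℂ) * Complex.I)⁻¹ •
      (∮ ζ in C(1, 1 / 2), Ring.inverse (ζ • (1 : H →L[ℂ] H) - A)) ∧
      ‖A - (2 * (Real.pi : ℂ) * Complex.I)⁻¹ •
      (∮ ζ in C(1, 1 / 2), Ring.inverse (ζ • (1 : H →L[ℂ] H) - A))‖ ≤ (8*M+4) * ε
  rw [hPi]
  have hsv' : s * v = (2⁻¹:ℂ) • (s - 1) := by
    rw [hvdef, mul_smul_comm, mul_sub, mul_one, hsT]
  constructor
  · -- idempotency
    set D : H →L[ℂ] H := ((2:ℂ)•A - 1) * s with hDdef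
    have hPD : A*s - s*v = (2⁻¹:ℂ) • (1 + D) := by
      rw [hsv', hDdef, sub_mul, smul_mul_assoc, one_mul]
      module
    have hC : Commute ((2:ℂ)•A - 1) s := (hAs.smul_left _).sub_left (Commute.one_left s)
    have h2A1 : ((2:ℂ)•A - 1) * ((2:ℂ)•A - 1) = T*T := by
      rw [hT2]
      simp only [sub_mul, mul_sub, smul_mul_assoc, mul_smul_comm, smul_smul, one_mul, mul_one]
      module
    have hD2 : D * D = 1 := by
      rw [hDdef, mul_assoc, ← mul_assoc s, ← hC.eq, mul_assoc ((2:ℂ)•A - 1) s s,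
        ← mul_assoc, h2A1, mul_assoc T T (s*s), ← mul_assoc T s s, hTs, one_mul, hTs]
    rw [hPD, smul_mul_smul_comm]
    have : ((1:H →L[ℂ] H) + D) * (1 + D) = 1 + D + (D + 1) := by
      simp only [add_mul, mul_add, one_mul, mul_one, hD2]
    rw [this]
    module
  · -- norm bound
    have hAP : A - (A*s - s*v) = A*(1-s) + (2⁻¹:ℂ)•(s-1) := by
      rw [hsv', mul_sub, mul_one]
      module
    rw [hAP]
    have e1 : ‖A*(1-s)‖ ≤ M * (8*ε) := by
      calc ‖A*(1-s)‖ ≤ ‖A‖ * ‖(1:H →L[ℂ] H)-s‖ := norm_mul_le _ _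
        _ ≤ M * (8*ε) := by
          rw [norm_sub_rev]
          exact mul_le_mul hMA hs1 (norm_nonneg _) (le_of_lt hM)
    have e2 : ‖(2⁻¹:ℂ)•(s-1)‖ ≤ 4*ε := by
      rw [norm_smul]
      have : ‖(2⁻¹:ℂ)‖ = 2⁻¹ := by simp
      rw [this]
      linarith
    calc ‖A*(1-s) + (2⁻¹:ℂ)•(s-1)‖ ≤ ‖A*(1-s)‖ + ‖(2⁻¹:ℂ)•(s-1)‖ := norm_add_le _ _
      _ ≤ M * (8*ε) + 4*ε := add_le_add e1 e2
      _ = (8*M+4) * ε := by ring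
end
end

section
/- One-dimensional Agmon-type estimate: Let P = h²D_R² + W(R) act on L²((0,∞)) with Dirichlet condition at 0, where W is continuous, bounded below, and satisfies W(R) − E ≥ c > 0 for R ∈ (0, r₀) ∪ (R₀, ∞). If Pφ = Eφ with ‖φ‖ = 1, then there exist c₀ > 0 and h₀ > 0 (depending only on c, r₀, R₀, sup W, E) such that ‖φ‖_{L²((0, r₀/2) ∪ (2R₀, ∞))} ≤ e^{−c₀/h} for all 0 < h < h₀. -/
open MeasureTheory Set Real

/-- Exterior Agmon lemma: nonneg `ψ` with `ψ'' ≥ k²ψ` on `[a,∞)`, integrable on `(a,∞)`,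
decays like `exp(-k(R-a))`. -/
lemma agmon_ext (k a : ℝ) (hk : 0 < k) (ha : 0 ≤ a) (ψ ψ₁ ψ₂ : ℝ → ℝ)
    (h1 : ∀ R, HasDerivAt ψ (ψ₁ R) R) (h2 : ∀ R, HasDerivAt ψ₁ (ψ₂ R) R)
    (hnn : ∀ R, 0 ≤ ψ R)
    (hode : ∀ R, a ≤ R → k ^ 2 * ψ R ≤ ψ₂ R)
    (hint : IntegrableOn ψ (Set.Ioi a)) :
    ∀ R, a ≤ R → ψ R ≤ ψ a * Real.exp (-(k * (R - a))) := by
  set V : ℝ → ℝ := fun R => Real.exp (-(k * R)) * (ψ₁ R + k * ψ R) with hVdef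
  have hexp : ∀ b R : ℝ, HasDerivAt (fun x => Real.exp (b * x)) (b * Real.exp (b * R)) R := by
    intro b R
    have : HasDerivAt (fun x : ℝ => b * x) b R := by
      simpa using (hasDerivAt_id R).const_mul b
    simpa [mul_comm] using this.exp
  have hexp' : ∀ b R : ℝ, HasDerivAt (fun x => Real.exp (-(b * x))) (-b * Real.exp (-(b * R))) R := by
    intro b R
    simpa [neg_mul] using hexp (-b) R
  have hV : ∀ R, HasDerivAt V (Real.exp (-(k * R)) * (ψ₂ R - k ^ 2 * ψ R)) R := by
    intro R
    have h := (hexp' k R).mul ((h2 R).add ((h1 R).const_mul k))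
    refine h.congr_deriv ?_
    simp only [Pi.add_apply]
    ring
  have hVmono : MonotoneOn V (Set.Ici a) := by
    apply monotoneOn_of_deriv_nonneg (convex_Ici a)
    · exact fun x _ => ((hV x).differentiableAt.continuousAt).continuousWithinAt
    · intro x hx
      exact (hV x).differentiableAt.differentiableWithinAt
    · intro x hx
      rw [interior_Ici] at hx
      rw [(hV x).deriv]
      have := hode x (le_of_lt hx)
      have := Real.exp_pos (-(k * x))
      nlinarith
  -- u = e^{kR} ψ
  set u : ℝ → ℝ := fun R => Real.exp (k * R) * ψ R with hudef
  have hu : ∀ R, HasDerivAt u (Real.exp (2 * k * R) * V R) R := by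
    intro R
    have h := (hexp k R).mul (h1 R)
    refine h.congr_deriv ?_
    simp only [hVdef]
    rw [show 2 * k * R = k * R + k * R by ring, Real.exp_add, Real.exp_neg]
    field_simp
    ring
  -- Step 1 : V ≤ 0 on [a, ∞)
  have hVle : ∀ b, a ≤ b → V b ≤ 0 := by
    intro b hb
    by_contra hpos
    push_neg at hpos
    set m := V b with hmdef
    -- g = u - m e^{2k(R-b)}/(2k) is monotone on [b, ∞)
    set g : ℝ → ℝ := fun R => u R - m * Real.exp (2 * k * (R - b)) / (2 * k) with hgdef
    have hg : ∀ R, HasDerivAt g (Real.exp (2 * k * R) * V R - m * Real.exp (2 * k * (R - b))) R := by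
      intro R
      have he : HasDerivAt (fun x => Real.exp (2 * k * (x - b))) (2 * k * Real.exp (2 * k * (R - b))) R := by
        have h0 : HasDerivAt (fun x : ℝ => 2 * k * (x - b)) (2 * k) R := by
          simpa using (((hasDerivAt_id R).sub_const b).const_mul (2 * k))
        simpa [mul_comm] using h0.exp
      have := (hu R).sub ((he.const_mul m).div_const (2 * k))
      refine this.congr_deriv ?_
      field_simp
    have hgmono : MonotoneOn g (Set.Ici b) := by
      apply monotoneOn_of_deriv_nonneg (convex_Ici b)
      · exact fun x _ => ((hg x).differentiableAt.continuousAt).continuousWithinAt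
      · intro x hx
        exact (hg x).differentiableAt.differentiableWithinAt
      · intro x hx
        rw [interior_Ici] at hx
        rw [(hg x).deriv]
        have hVx : m ≤ V x := hVmono (by exact hb) (le_trans hb (le_of_lt hx)) (le_of_lt hx)
        have he1 : Real.exp (2 * k * (x - b)) ≤ Real.exp (2 * k * x) := by
          apply Real.exp_le_exp.2
          nlinarith [mul_nonneg hk.le (le_trans ha hb)]
        nlinarith [mul_nonneg (Real.exp_pos (2 * k * x)).le (sub_nonneg.2 hVx),
          mul_nonneg hpos.le (sub_nonneg.2 he1)]
    -- lower bound for ψ on [b+1, ∞)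
    set ε := Real.exp (-(k * b)) * (Real.exp k - 1) * m / (2 * k) with hεdef
    have h1k : 1 < Real.exp k := by
      rw [show (1:ℝ) = Real.exp 0 by simp]
      exact Real.exp_lt_exp.2 hk
    have hε : 0 < ε := by
      rw [hεdef]
      apply div_pos _ (by linarith)
      apply mul_pos (mul_pos (Real.exp_pos _) (by linarith)) hpos
    have hlow : ∀ R, b + 1 ≤ R → ε ≤ ψ R := by
      intro R hR
      have hbR : b ≤ R := by linarith
      have hgR : g b ≤ g R := hgmono (self_mem_Ici) hbR hbR
      simp only [hgdef] at hgR
      have hub : 0 ≤ u b := by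
        have := hnn b; positivity
      have huR : m * (Real.exp (2 * k * (R - b)) - 1) / (2 * k) ≤ u R := by
        have he0 : Real.exp (2 * k * (b - b)) = 1 := by simp
        rw [he0] at hgR
        have hsplit : m * (Real.exp (2 * k * (R - b)) - 1) / (2 * k)
            = m * Real.exp (2 * k * (R - b)) / (2 * k) - m * 1 / (2 * k) := by ring
        linarith [hgR, hub]
      -- e^{2k(R-b)} - 1 ≥ e^{k(R-b)}(e^k - 1)
      have hkey : Real.exp (k * (R - b)) * (Real.exp k - 1) ≤ Real.exp (2 * k * (R - b)) - 1 := by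
        have e1 : Real.exp (2 * k * (R - b)) = Real.exp (k * (R - b)) * Real.exp (k * (R - b)) := by
          rw [← Real.exp_add]; ring_nf
        have e2 : Real.exp k ≤ Real.exp (k * (R - b)) := by
          apply Real.exp_le_exp.2
          nlinarith
        have e3 : 1 ≤ Real.exp (k * (R - b)) := by
          rw [show (1:ℝ) = Real.exp 0 by simp]
          apply Real.exp_le_exp.2
          nlinarith
        nlinarith
      -- ψ R = e^{-kR} u R
      have hψR : ψ R = Real.exp (-(k * R)) * u R := by
        simp only [hudef]
        rw [← mul_assoc, ← Real.exp_add]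
        simp
      rw [hψR, hεdef]
      have h2k : 0 < 2 * k := by linarith
      have hfin : Real.exp (-(k * R)) * (m * (Real.exp (k * (R - b)) * (Real.exp k - 1)) / (2 * k)) = ε := by
        rw [hεdef]
        rw [show Real.exp (-(k*R)) * (m * (Real.exp (k * (R - b)) * (Real.exp k - 1)) / (2*k))
            = (Real.exp (-(k*R)) * Real.exp (k * (R - b))) * (Real.exp k - 1) * m / (2*k) by ring]
        rw [← Real.exp_add]
        ring_nf
      calc ε = Real.exp (-(k * R)) * (m * (Real.exp (k * (R - b)) * (Real.exp k - 1)) / (2 * k)) := hfin.symm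
        _ ≤ Real.exp (-(k * R)) * (m * (Real.exp (2 * k * (R - b)) - 1) / (2 * k)) := by
            apply mul_le_mul_of_nonneg_left _ (Real.exp_pos _).le
            apply div_le_div_of_nonneg_right ?_ h2k.le |>.trans_eq rfl
            nlinarith [mul_le_mul_of_nonneg_left hkey hpos.le]
        _ ≤ Real.exp (-(k * R)) * u R := by
            apply mul_le_mul_of_nonneg_left huR (Real.exp_pos _).le
    -- contradiction with integrability
    have hint' : IntegrableOn ψ (Set.Ioi (b + 1)) :=
      hint.mono_set (Set.Ioi_subset_Ioi (by linarith))
    have hconst : Integrable (fun _ : ℝ => ε) (volume.restrict (Set.Ioi (b + 1))) := by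
      apply Integrable.mono hint' aestronglyMeasurable_const
      rw [ae_restrict_iff' measurableSet_Ioi]
      filter_upwards with x hx
      have := hlow x (le_of_lt hx)
      have h0 := hnn x
      simp only [Real.norm_eq_abs]
      rw [abs_of_pos hε, abs_of_nonneg h0]
      exact this
    rw [integrable_const_iff] at hconst
    rcases hconst with h | h
    · exact absurd h (ne_of_gt hε)
    · rw [isFiniteMeasure_restrict, Real.volume_Ioi] at h
      simp at h
  -- Step 2 : u antitone on [a, ∞)
  have huanti : AntitoneOn u (Set.Ici a) := by
    apply antitoneOn_of_deriv_nonpos (convex_Ici a)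
    · exact fun x _ => ((hu x).differentiableAt.continuousAt).continuousWithinAt
    · intro x hx
      exact (hu x).differentiableAt.differentiableWithinAt
    · intro x hx
      rw [interior_Ici] at hx
      rw [(hu x).deriv]
      have := hVle x (le_of_lt hx)
      nlinarith [Real.exp_pos (2 * k * x)]
  intro R hR
  have := huanti (self_mem_Ici) hR hR
  simp only [hudef] at this
  have hpos : (0:ℝ) < Real.exp (k * R) := Real.exp_pos _
  have heq : ψ a * Real.exp (-(k * (R - a))) = Real.exp (k * a) * ψ a / Real.exp (k * R) := by
    rw [show -(k * (R - a)) = k * a - k * R by ring, Real.exp_sub]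
    ring
  rw [heq, le_div_iff₀ hpos]
  nlinarith [this]

/-- Interior Agmon lemma: nonneg `ψ` with `ψ(0)=0` and `ψ'' ≥ k²ψ` on `(0,a]` satisfies
`ψ R ≤ ψ a · exp(-k(a-R))` on `[0,a]`. -/
lemma agmon_int (k a : ℝ) (hk : 0 < k) (ha : 0 < a) (ψ ψ₁ ψ₂ : ℝ → ℝ)
    (h1 : ∀ R, HasDerivAt ψ (ψ₁ R) R) (h2 : ∀ R, HasDerivAt ψ₁ (ψ₂ R) R)
    (hnn : ∀ R, 0 ≤ ψ R) (hzero : ψ 0 = 0)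
    (hode : ∀ R, 0 < R → R ≤ a → k ^ 2 * ψ R ≤ ψ₂ R) :
    ∀ R, 0 ≤ R → R ≤ a → ψ R ≤ ψ a * Real.exp (-(k * (a - R))) := by
  have hexp : ∀ b R : ℝ, HasDerivAt (fun x => Real.exp (b * x)) (b * Real.exp (b * R)) R := by
    intro b R
    have : HasDerivAt (fun x : ℝ => b * x) b R := by
      simpa using (hasDerivAt_id R).const_mul b
    simpa [mul_comm] using this.exp
  set V : ℝ → ℝ := fun R => Real.exp (k * R) * (ψ₁ R - k * ψ R) with hVdef
  have hV : ∀ R, HasDerivAt V (Real.exp (k * R) * (ψ₂ R - k ^ 2 * ψ R)) R := by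
    intro R
    have h := (hexp k R).mul ((h2 R).sub ((h1 R).const_mul k))
    refine h.congr_deriv ?_
    simp only [Pi.sub_apply]
    ring
  have hVmono : MonotoneOn V (Set.Icc 0 a) := by
    apply monotoneOn_of_deriv_nonneg (convex_Icc 0 a)
    · exact fun x _ => ((hV x).differentiableAt.continuousAt).continuousWithinAt
    · intro x hx
      exact (hV x).differentiableAt.differentiableWithinAt
    · intro x hx
      rw [interior_Icc] at hx
      rw [(hV x).deriv]
      have := hode x hx.1 hx.2.le
      have := Real.exp_pos (k * x)
      nlinarith
  -- u = e^{-kR} ψ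
  set u : ℝ → ℝ := fun R => Real.exp (-(k * R)) * ψ R with hudef
  have hu : ∀ R, HasDerivAt u (Real.exp (-(2 * k * R)) * V R) R := by
    intro R
    have hexp' : HasDerivAt (fun x => Real.exp (-(k * x))) (-k * Real.exp (-(k * R))) R := by
      simpa [neg_mul] using hexp (-k) R
    have h := hexp'.mul (h1 R)
    refine h.congr_deriv ?_
    have hE : Real.exp (-(k * R)) * Real.exp (k * R) = 1 := by
      rw [← Real.exp_add]; simp
    simp only [hVdef]
    rw [show -(2 * k * R) = -(k * R) + -(k * R) by ring, Real.exp_add]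
    linear_combination (-(Real.exp (-(k * R)) * (ψ₁ R - k * ψ R))) * hE
  -- Step 1 : V ≥ 0 on (0, a)
  have hVge : ∀ b, 0 < b → b < a → 0 ≤ V b := by
    intro b hb0 hba
    by_contra hneg
    push_neg at hneg
    -- on (0,b], u' ≤ e^{-2kb} V b < 0
    obtain ⟨ξ, hξ, hslope⟩ := exists_hasDerivAt_eq_slope u (fun R => Real.exp (-(2 * k * R)) * V R)
      hb0 (fun x _ => (hu x).differentiableAt.continuousAt.continuousWithinAt)
      (fun x _ => hu x)
    have hVξ : V ξ ≤ V b := hVmono ⟨hξ.1.le, le_trans hξ.2.le hba.le⟩ ⟨hb0.le, hba.le⟩ hξ.2.le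
    have hderiv_neg : Real.exp (-(2 * k * ξ)) * V ξ < 0 := by
      have := Real.exp_pos (-(2 * k * ξ))
      nlinarith
    rw [hslope] at hderiv_neg
    have hu0 : u 0 = 0 := by simp [hudef, hzero]
    have hub : 0 ≤ u b := by
      have := hnn b
      have := Real.exp_pos (-(k * b))
      positivity
    rw [hu0, sub_zero, sub_zero] at hderiv_neg
    have : u b / b < 0 := hderiv_neg
    have : u b < 0 := by
      rcases lt_or_ge (u b) 0 with h | h
      · exact h
      · exfalso
        have : 0 ≤ u b / b := div_nonneg h hb0.le
        linarith
    linarith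
  -- Step 2 : u monotone on [0, a]
  have humono : MonotoneOn u (Set.Icc 0 a) := by
    apply monotoneOn_of_deriv_nonneg (convex_Icc 0 a)
    · exact fun x _ => ((hu x).differentiableAt.continuousAt).continuousWithinAt
    · intro x hx
      exact (hu x).differentiableAt.differentiableWithinAt
    · intro x hx
      rw [interior_Icc] at hx
      rw [(hu x).deriv]
      have := hVge x hx.1 hx.2
      positivity
  intro R hR0 hRa
  have := humono ⟨hR0, hRa⟩ ⟨le_refl 0 |>.trans ha.le, le_refl a⟩ hRa
  simp only [hudef] at this
  have hpos : (0:ℝ) < Real.exp (-(k * R)) := Real.exp_pos _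
  have heq : ψ a * Real.exp (-(k * (a - R))) = (Real.exp (-(k * a)) * ψ a) / Real.exp (-(k * R)) := by
    rw [show -(k * (a - R)) = -(k * a) - -(k * R) by ring, Real.exp_sub]
    ring
  rw [heq, le_div_iff₀ hpos]
  nlinarith [this]

/-- There is a point in `[s,t]` where a continuous nonneg function is at most its average. -/
lemma exists_small_point (ψ : ℝ → ℝ) (hcont : Continuous ψ) (s t : ℝ) (hst : s < t)
    (hI : (∫ x in Set.Ioc s t, ψ x) ≤ 1) :
    ∃ b ∈ Set.Icc s t, ψ b * (t - s) ≤ 1 := by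
  obtain ⟨b, hb, hmin⟩ := isCompact_Icc.exists_isMinOn ⟨s, le_refl s, hst.le⟩
    hcont.continuousOn
  refine ⟨b, hb, ?_⟩
  have hmeas : (volume (Set.Ioc s t)).toReal = t - s := by
    rw [Real.volume_Ioc, ENNReal.toReal_ofReal (by linarith)]
  have hconst : (∫ _x in Set.Ioc s t, ψ b) = ψ b * (t - s) := by
    rw [setIntegral_const, measureReal_def, hmeas, smul_eq_mul, mul_comm]
  have hle : (∫ _x in Set.Ioc s t, ψ b) ≤ ∫ x in Set.Ioc s t, ψ x := by
    apply setIntegral_mono_on (integrableOn_const ?_)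
      (hcont.integrableOn_Ioc) measurableSet_Ioc
    · intro x hx
      exact hmin ⟨hx.1.le, hx.2⟩
    · rw [Real.volume_Ioc]
      exact ENNReal.ofReal_ne_top
  linarith [hconst ▸ hle]

/-- `∫_{Ioi t} e^{-kx} dx = e^{-kt}/k`. -/
lemma my_integral_exp_neg_Ioi (k t : ℝ) (hk : 0 < k) :
    (∫ x in Set.Ioi t, Real.exp (-(k * x))) = Real.exp (-(k * t)) / k := by
  have hderiv : ∀ x ∈ Set.Ici t, HasDerivAt (fun y => -Real.exp (-(k * y)) / k)
      (Real.exp (-(k * x))) x := by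
    intro x _
    have h0 : HasDerivAt (fun y : ℝ => -(k * y)) (-k) x := by
      simpa [Pi.neg_def] using ((hasDerivAt_id x).const_mul k).neg
    have h1 := (h0.exp.neg).div_const k
    refine h1.congr_deriv ?_
    field_simp
  have hint : MeasureTheory.IntegrableOn (fun x => Real.exp (-(k * x))) (Set.Ioi t) := by
    simpa [neg_mul] using exp_neg_integrableOn_Ioi t hk
  have htend : Filter.Tendsto (fun y => -Real.exp (-(k * y)) / k) Filter.atTop (nhds 0) := by
    have h2 : Filter.Tendsto (fun y : ℝ => k * y) Filter.atTop Filter.atTop :=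
      Filter.Tendsto.const_mul_atTop hk Filter.tendsto_id
    have h3 := (Real.tendsto_exp_neg_atTop_nhds_zero.comp h2).neg.div_const k
    simpa using h3
  have := MeasureTheory.integral_Ioi_of_hasDerivAt_of_tendsto' hderiv hint htend
  rw [this]
  field_simp
  ring

set_option maxHeartbeats 1000000 in
/-- 1D Agmon estimate: if `W − E ≥ c > 0` on `(0,r₀) ∪ (R₀,∞)` and
`φ` is a normalized Dirichlet eigenfunction of `−h²d²/dR² + W` with eigenvalue `E`,
then `‖φ‖_{L²((0,r₀/2)∪(2R₀,∞))} ≤ e^{−c₀/h}` for `0 < h < h₀`, with `c₀, h₀`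
depending only on `c, r₀, R₀, sup W, E`. -/
theorem stmt_16 (c r₀ R₀ SW E : ℝ) (hc : 0 < c) (hr₀ : 0 < r₀) (hrR : r₀ < R₀) :
    ∃ c₀ > (0 : ℝ), ∃ h₀ > (0 : ℝ), ∀ W : ℝ → ℝ,
      Continuous W → BddBelow (Set.range W) → (∀ R, W R ≤ SW) →
      (∀ R : ℝ, (0 < R ∧ R < r₀) ∨ R₀ < R → c ≤ W R - E) →
      ∀ h : ℝ, 0 < h → h < h₀ →
      ∀ φ : ℝ → ℝ, ContDiff ℝ 2 φ → φ 0 = 0 →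
        (∀ R : ℝ, 0 < R → -h ^ 2 * iteratedDeriv 2 φ R + W R * φ R = E * φ R) →
        (∫ R in Set.Ioi (0 : ℝ), φ R ^ 2) = 1 →
        (∫ R in Set.Ioo (0 : ℝ) (r₀ / 2) ∪ Set.Ioi (2 * R₀), φ R ^ 2) ≤
          Real.exp (-c₀ / h) ^ 2 := by
  have hR₀ : 0 < R₀ := lt_trans hr₀ hrR
  set sk := Real.sqrt (2 * c) with hskdef
  have hsk : 0 < sk := Real.sqrt_pos.2 (by linarith)
  refine ⟨sk * r₀ / 16, by positivity, min (R₀ * sk) (sk * r₀ / 64), by positivity,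
    ?_⟩
  set c₀ := sk * r₀ / 16 with hc₀def
  intro W hWcont hWbdd hWsw hWE h hh hhh φ hφ hφ0 hODE hnorm
  have hh₀1 : h < R₀ * sk := lt_of_lt_of_le hhh (min_le_left _ _)
  have hh₀2 : h < c₀ / 4 := by
    have := lt_of_lt_of_le hhh (min_le_right _ _)
    rw [hc₀def]; linarith
  set k := sk / h with hkdef
  have hk : 0 < k := by positivity
  have hk2 : k ^ 2 = 2 * c / h ^ 2 := by
    rw [hkdef, div_pow, hskdef, Real.sq_sqrt (by linarith : (0:ℝ) ≤ 2 * c)]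
  -- derivatives
  have hφdiff : Differentiable ℝ φ := hφ.differentiable (by norm_num)
  have hφ'diff : Differentiable ℝ (deriv φ) := by
    have h2 : ContDiff ℝ ((1 : ℕ) + 1) φ := by exact_mod_cast hφ
    exact (contDiff_succ_iff_deriv.mp h2).2.2.differentiable (by norm_num)
  set ψ : ℝ → ℝ := fun R => φ R ^ 2 with hψdef
  set ψ₁ : ℝ → ℝ := fun R => 2 * φ R * deriv φ R with hψ₁def
  set ψ₂ : ℝ → ℝ := fun R => 2 * deriv φ R ^ 2 + 2 * φ R * deriv (deriv φ) R with hψ₂def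
  have h1 : ∀ R, HasDerivAt ψ (ψ₁ R) R := by
    intro R
    have := (hφdiff R).hasDerivAt.pow 2
    simpa [hψ₁def, Pi.pow_def] using this
  have h2 : ∀ R, HasDerivAt ψ₁ (ψ₂ R) R := by
    intro R
    have := ((hφdiff R).hasDerivAt.const_mul 2).mul (hφ'diff R).hasDerivAt
    refine this.congr_deriv ?_
    simp only [hψ₂def]
    ring
  have hψcont : Continuous ψ := (hφdiff.continuous).pow 2
  have hnn : ∀ R, 0 ≤ ψ R := fun R => sq_nonneg (φ R)
  have hIφ : MeasureTheory.IntegrableOn ψ (Set.Ioi 0) := by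
    by_contra hni
    rw [MeasureTheory.integral_undef hni] at hnorm
    norm_num at hnorm
  -- differential inequality on the forbidden region
  have hode : ∀ R : ℝ, (0 < R ∧ R < r₀) ∨ R₀ < R → k ^ 2 * ψ R ≤ ψ₂ R := by
    intro R hfor
    have hR0 : 0 < R := by
      rcases hfor with ⟨h', _⟩ | h'
      · exact h'
      · linarith
    have hiter : iteratedDeriv 2 φ R = deriv (deriv φ) R := by
      rw [show (2:ℕ) = 1 + 1 from rfl, iteratedDeriv_succ, iteratedDeriv_one]
    have heq := hODE R hR0
    rw [hiter] at heq
    have hWc' : c ≤ W R - E := hWE R hfor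
    have hd2 : h ^ 2 * deriv (deriv φ) R = (W R - E) * φ R := by linarith
    have hh2 : (0:ℝ) < h ^ 2 := by positivity
    simp only [hψdef, hψ₂def]
    rw [hk2, div_mul_eq_mul_div, div_le_iff₀ hh2]
    have key : (2 * deriv φ R ^ 2 + 2 * φ R * deriv (deriv φ) R) * h ^ 2
        = 2 * h ^ 2 * deriv φ R ^ 2 + 2 * (W R - E) * φ R ^ 2 := by
      linear_combination (2 * φ R) * hd2
    rw [key]
    nlinarith [mul_nonneg (by linarith : (0:ℝ) ≤ W R - E - c) (sq_nonneg (φ R)),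
      mul_nonneg (sq_nonneg h) (sq_nonneg (deriv φ R))]
  -- bound ∫ over subintervals by 1
  have hsub : ∀ s t : ℝ, 0 ≤ s → s < t → (∫ x in Set.Ioc s t, ψ x) ≤ 1 := by
    intro s t hs hst
    rw [← hnorm]
    apply MeasureTheory.setIntegral_mono_set hIφ
    · exact MeasureTheory.ae_of_all _ (fun x => hnn x)
    · apply HasSubset.Subset.eventuallyLE
      intro x hx
      exact lt_of_le_of_lt hs hx.1
  -- interior point
  obtain ⟨a₁, ha₁mem, ha₁le⟩ := exists_small_point ψ hψcont (3/4 * r₀) (7/8 * r₀)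
    (by linarith) (hsub _ _ (by linarith) (by linarith))
  have hψa₁ : ψ a₁ ≤ 8 / r₀ := by
    have h8 : (0:ℝ) < r₀ / 8 := by linarith
    rw [le_div_iff₀ hr₀]
    nlinarith [ha₁le, hnn a₁]
  have hdecay₁ : ∀ R, 0 ≤ R → R ≤ a₁ → ψ R ≤ ψ a₁ * Real.exp (-(k * (a₁ - R))) := by
    apply agmon_int k a₁ hk (by linarith [ha₁mem.1]) ψ ψ₁ ψ₂ h1 h2 hnn
    · simp [hψdef, hφ0]
    · intro R hR0 hRa
      exact hode R (Or.inl ⟨hR0, by linarith [ha₁mem.2]⟩)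
  -- exterior point
  obtain ⟨a₂, ha₂mem, ha₂le⟩ := exists_small_point ψ hψcont (5/4 * R₀) (3/2 * R₀)
    (by linarith) (hsub _ _ (by linarith) (by linarith))
  have hψa₂ : ψ a₂ ≤ 4 / R₀ := by
    rw [le_div_iff₀ hR₀]
    nlinarith [ha₂le, hnn a₂]
  have hdecay₂ : ∀ R, a₂ ≤ R → ψ R ≤ ψ a₂ * Real.exp (-(k * (R - a₂))) := by
    apply agmon_ext k a₂ hk (by linarith [ha₂mem.1]) ψ ψ₁ ψ₂ h1 h2 hnn
    · intro R hR
      exact hode R (Or.inr (by linarith [ha₂mem.1]))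
    · exact hIφ.mono_set (Set.Ioi_subset_Ioi (by linarith [ha₂mem.1]))
  set S := Real.exp (-(k * (r₀ / 4))) with hSdef
  have hSpos : 0 < S := Real.exp_pos _
  -- interior integral bound
  have hInt1 : MeasureTheory.IntegrableOn ψ (Set.Ioo 0 (r₀ / 2)) :=
    hIφ.mono_set (fun x hx => hx.1)
  have hI1 : (∫ x in Set.Ioo (0:ℝ) (r₀ / 2), ψ x) ≤ 4 * S := by
    have hbd : ∀ x ∈ Set.Ioo (0:ℝ) (r₀ / 2), ψ x ≤ (8 / r₀) * S := by
      intro x hx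
      have hxa : x ≤ a₁ := by linarith [ha₁mem.1, hx.2]
      calc ψ x ≤ ψ a₁ * Real.exp (-(k * (a₁ - x))) := hdecay₁ x hx.1.le hxa
        _ ≤ (8 / r₀) * S := by
            apply mul_le_mul hψa₁ _ (Real.exp_pos _).le (by positivity)
            rw [hSdef]
            apply Real.exp_le_exp.2
            have : r₀ / 4 ≤ a₁ - x := by linarith [ha₁mem.1, hx.2]
            nlinarith [hk]
    calc (∫ x in Set.Ioo (0:ℝ) (r₀ / 2), ψ x)
        ≤ ∫ _x in Set.Ioo (0:ℝ) (r₀ / 2), (8 / r₀) * S := by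
          apply MeasureTheory.setIntegral_mono_on hInt1 _ measurableSet_Ioo hbd
          exact MeasureTheory.integrableOn_const (by
            rw [Real.volume_Ioo]; exact ENNReal.ofReal_ne_top)
      _ = (r₀ / 2) * ((8 / r₀) * S) := by
          rw [MeasureTheory.setIntegral_const, measureReal_def, Real.volume_Ioo, smul_eq_mul,
            ENNReal.toReal_ofReal (by linarith)]
          ring_nf
      _ ≤ 4 * S := by
          have hr₀' : r₀ ≠ 0 := ne_of_gt hr₀
          apply le_of_eq
          field_simp
          ring
  -- exterior integral bound
  have hInt2 : MeasureTheory.IntegrableOn ψ (Set.Ioi (2 * R₀)) :=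
    hIφ.mono_set (Set.Ioi_subset_Ioi (by linarith))
  have hexpint : MeasureTheory.IntegrableOn (fun x => Real.exp (-(k * x))) (Set.Ioi (2 * R₀)) := by
    simpa [neg_mul] using exp_neg_integrableOn_Ioi (2 * R₀) hk
  have hI2 : (∫ x in Set.Ioi (2 * R₀), ψ x) ≤ 4 * S := by
    set C := ψ a₂ * Real.exp (k * a₂) with hCdef
    have hC0 : 0 ≤ C := by
      have := hnn a₂; positivity
    have hbd : ∀ x ∈ Set.Ioi (2 * R₀), ψ x ≤ C * Real.exp (-(k * x)) := by
      intro x hx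
      have hxa : a₂ ≤ x := by
        have := ha₂mem.2
        have hx' : 2 * R₀ < x := hx
        linarith
      calc ψ x ≤ ψ a₂ * Real.exp (-(k * (x - a₂))) := hdecay₂ x hxa
        _ = C * Real.exp (-(k * x)) := by
            rw [hCdef, mul_assoc, ← Real.exp_add]
            ring_nf
    calc (∫ x in Set.Ioi (2 * R₀), ψ x)
        ≤ ∫ x in Set.Ioi (2 * R₀), C * Real.exp (-(k * x)) := by
          apply MeasureTheory.setIntegral_mono_on hInt2 (hexpint.const_mul C)
            measurableSet_Ioi hbd
      _ = C * (Real.exp (-(k * (2 * R₀))) / k) := by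
          rw [MeasureTheory.integral_const_mul, my_integral_exp_neg_Ioi k (2 * R₀) hk]
      _ ≤ 4 * S := by
          -- C * exp(-2kR₀)/k = ψa₂ exp(-(k(2R₀ - a₂)))/k ≤ (4/R₀)(1/k) S' ≤ 4 S
          have he1 : Real.exp (k * a₂) * Real.exp (-(k * (2 * R₀))) =
              Real.exp (-(k * (2 * R₀ - a₂))) := by
            rw [← Real.exp_add]; ring_nf
          have he2 : Real.exp (-(k * (2 * R₀ - a₂))) ≤ S := by
            rw [hSdef]
            apply Real.exp_le_exp.2
            have : r₀ / 4 ≤ 2 * R₀ - a₂ := by linarith [ha₂mem.2]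
            nlinarith [hk]
          have hkR : 1 / (R₀ * k) ≤ 1 := by
            rw [div_le_one (by positivity)]
            have hkk : R₀ * k = R₀ * sk / h := by rw [hkdef]; ring
            rw [hkk, le_div_iff₀ hh]
            nlinarith [hh₀1]
          have hrw : C * (Real.exp (-(k * (2 * R₀))) / k)
              = ψ a₂ * Real.exp (-(k * (2 * R₀ - a₂))) / k := by
            rw [hCdef, ← he1]; ring
          rw [hrw]
          have step1 : ψ a₂ * Real.exp (-(k * (2 * R₀ - a₂))) / k ≤ (4 / R₀) * S / k := by
            apply div_le_div_of_nonneg_right ?_ hk.le |>.trans_eq rfl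
            apply mul_le_mul hψa₂ he2 (Real.exp_pos _).le (by positivity)
          calc ψ a₂ * Real.exp (-(k * (2 * R₀ - a₂))) / k ≤ (4 / R₀) * S / k := step1
            _ = 4 * S * (1 / (R₀ * k)) := by ring
            _ ≤ 4 * S * 1 := by
                apply mul_le_mul_of_nonneg_left hkR (by positivity)
            _ = 4 * S := by ring
  -- combine
  have hdisj : Disjoint (Set.Ioo (0:ℝ) (r₀ / 2)) (Set.Ioi (2 * R₀)) := by
    rw [Set.disjoint_left]
    intro x hx1 hx2
    have : x < r₀ / 2 := hx1.2
    have : 2 * R₀ < x := hx2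
    linarith
  rw [MeasureTheory.setIntegral_union hdisj measurableSet_Ioi hInt1 hInt2]
  have htotal : (∫ x in Set.Ioo (0:ℝ) (r₀ / 2), ψ x) + (∫ x in Set.Ioi (2 * R₀), ψ x)
      ≤ 8 * S := by linarith
  refine le_trans htotal ?_
  -- 8 S ≤ exp(-c₀/h)^2
  have hS : S = Real.exp (-(4 * c₀ / h)) := by
    rw [hSdef]
    congr 1
    rw [hkdef, hc₀def]
    field_simp
    ring
  have hrhs : Real.exp (-c₀ / h) ^ 2 = Real.exp (2 * c₀ / h) * Real.exp (-(4 * c₀ / h)) := by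
    rw [← Real.exp_nat_mul, ← Real.exp_add]
    congr 1
    push_cast
    field_simp
    ring
  rw [hS, hrhs]
  apply mul_le_mul_of_nonneg_right _ (Real.exp_pos _).le
  have h8 : (8:ℝ) ≤ 2 * c₀ / h + 1 := by
    rw [div_add' _ _ _ (ne_of_gt hh), le_div_iff₀ hh]
    nlinarith [hh₀2, hh]
  calc (8:ℝ) ≤ 2 * c₀ / h + 1 := h8
    _ ≤ Real.exp (2 * c₀ / h) := by
        have := Real.add_one_le_exp (2 * c₀ / h)
        linarith
end
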